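/- Fix t ≥ 1 and suppose that the averages of the tracking variables satisfy (1/M)Σ_{i=1}^M s_i^(t−1) = g^(t−1). Then the gradient-tracking error satisfies the recursion (Σ_{i=1}^M ‖s_i^(t) − g^(t)‖²)^{1/2} ≤ ((1+β)/2) (Σ_{i=1}^M ‖s_i^(t−1) − g^(t−1)‖²)^{1/2} + L₁ (Σ_{i=1}^M ‖x_i^(t) − x_i^(t−1)‖²)^{1/2}, where L₁ = 6λ₁. -/

import Mathlib

set_option autoImplicit false

open scoped RealInnerProductSpace

/-- `matVec A v` is the matrix-vector product `A v`, viewed as a map on Euclidean space. -/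
noncomputable def matVec {n : ℕ} (A : Matrix (Fin n) (Fin n) ℝ)
    (v : EuclideanSpace ℝ (Fin n)) : EuclideanSpace ℝ (Fin n) :=
  WithLp.toLp 2 (A.mulVec v)

/-- The local Krasulina pseudo-gradient `h_i(v) = C_i v − (vᵀC_i v/‖v‖²) v`. -/
noncomputable def pgrad {d : ℕ} (A : Matrix (Fin d) (Fin d) ℝ)
    (v : EuclideanSpace ℝ (Fin d)) : EuclideanSpace ℝ (Fin d) :=
  matVec A v - (⟪v, matVec A v⟫ / ‖v‖ ^ 2) • v

def toE {n : ℕ} (v : Fin n → ℝ) : EuclideanSpace ℝ (Fin n) := WithLp.toLp 2 v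

lemma inner_eq_dot {n : ℕ} (a b : EuclideanSpace ℝ (Fin n)) :
    ⟪a, b⟫ = dotProduct (a : Fin n → ℝ) (b : Fin n → ℝ) := by
  simp [PiLp.inner_apply, dotProduct, RCLike.inner_apply, mul_comm]

lemma norm_sq_eq' {n : ℕ} (a : EuclideanSpace ℝ (Fin n)) : ‖a‖^2 = ∑ i, a i ^ 2 := by
  rw [← real_inner_self_eq_norm_sq, inner_eq_dot]
  simp [dotProduct, sq]

lemma matVec_symm {n : ℕ} {A : Matrix (Fin n) (Fin n) ℝ} (hA : A.IsSymm)
    (a b : EuclideanSpace ℝ (Fin n)) : ⟪matVec A a, b⟫ = ⟪a, matVec A b⟫ := by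
  rw [inner_eq_dot, inner_eq_dot, matVec, matVec, WithLp.ofLp_toLp, WithLp.ofLp_toLp,
    Matrix.dotProduct_mulVec, ← Matrix.mulVec_transpose, hA.eq, dotProduct_comm]

-- Parseval machinery for an orthonormal family of full cardinality
lemma onb_inner {n : ℕ} (hn : 0 < n) {u : Fin n → EuclideanSpace ℝ (Fin n)}
    (hu : Orthonormal ℝ u) (a c : EuclideanSpace ℝ (Fin n)) :
    ⟪a, c⟫ = ∑ i, ⟪u i, a⟫ * ⟪u i, c⟫ := by
  haveI : Nonempty (Fin n) := ⟨⟨0, hn⟩⟩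
  have hcard : Fintype.card (Fin n) = Module.finrank ℝ (EuclideanSpace ℝ (Fin n)) := by simp
  set b : OrthonormalBasis (Fin n) ℝ (EuclideanSpace ℝ (Fin n)) :=
    (basisOfOrthonormalOfCardEqFinrank hu hcard).toOrthonormalBasis
      (by rwa [coe_basisOfOrthonormalOfCardEqFinrank]) with hb
  have hbu : ∀ i, b i = u i := fun i => by
    rw [hb, Module.Basis.coe_toOrthonormalBasis, coe_basisOfOrthonormalOfCardEqFinrank]
  rw [← LinearIsometryEquiv.inner_map_map b.repr a c, inner_eq_dot]
  simp only [dotProduct]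
  exact Finset.sum_congr rfl fun i _ => by
    rw [OrthonormalBasis.repr_apply_apply, OrthonormalBasis.repr_apply_apply, hbu]

lemma onb_norm {n : ℕ} (hn : 0 < n) {u : Fin n → EuclideanSpace ℝ (Fin n)}
    (hu : Orthonormal ℝ u) (a : EuclideanSpace ℝ (Fin n)) :
    ‖a‖^2 = ∑ i, ⟪u i, a⟫ ^ 2 := by
  rw [← real_inner_self_eq_norm_sq, onb_inner hn hu]
  exact Finset.sum_congr rfl fun i _ => (sq _).symm

-- quadratic form bounded by top eigenvalue
lemma quad_bound {d : ℕ} (hd : 0 < d) {C : Matrix (Fin d) (Fin d) ℝ} (hCs : C.IsSymm)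
    {lam : Fin d → ℝ} {q : Fin d → EuclideanSpace ℝ (Fin d)} (hq : Orthonormal ℝ q)
    (heig : ∀ l, matVec C (q l) = lam l • q l)
    (hmono : ∀ i j : Fin d, i ≤ j → lam j ≤ lam i)
    (v : EuclideanSpace ℝ (Fin d)) :
    ⟪v, matVec C v⟫ ≤ lam ⟨0, hd⟩ * ‖v‖ ^ 2 := by
  rw [onb_inner hd hq, onb_norm hd hq, Finset.mul_sum]
  apply Finset.sum_le_sum
  intro l _
  have h1 : ⟪q l, matVec C v⟫ = lam l * ⟪q l, v⟫ := by
    rw [← matVec_symm hCs, heig, real_inner_smul_left]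
  rw [h1, show ⟪q l, v⟫ * (lam l * ⟪q l, v⟫) = lam l * ⟪q l, v⟫^2 by ring]
  exact mul_le_mul_of_nonneg_right (hmono ⟨0, hd⟩ l (by simp [Fin.le_def])) (sq_nonneg _)

lemma matVec_sum {n : ℕ} {ι : Type*} [DecidableEq ι] (s : Finset ι)
    (A : ι → Matrix (Fin n) (Fin n) ℝ) (v : EuclideanSpace ℝ (Fin n)) :
    matVec (∑ i ∈ s, A i) v = ∑ i ∈ s, matVec (A i) v := by
  induction s using Finset.induction_on with
  | empty =>
    simp [matVec, Matrix.zero_mulVec]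
  | insert _ _ h ih =>
    rw [Finset.sum_insert h, Finset.sum_insert h, ← ih]
    simp [matVec, Matrix.add_mulVec]

section psdfact
open scoped MatrixOrder
lemma psd_eq_star_mul {n : ℕ} {A : Matrix (Fin n) (Fin n) ℝ} (hA : A.PosSemidef) :
    ∃ B : Matrix (Fin n) (Fin n) ℝ, A = star B * B :=
  CStarAlgebra.nonneg_iff_eq_star_mul_self.mp hA.nonneg
end psdfact

lemma psd_cs {n : ℕ} {A : Matrix (Fin n) (Fin n) ℝ} (hA : A.PosSemidef) {L : ℝ} (hL : 0 ≤ L)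
    (hq : ∀ v : EuclideanSpace ℝ (Fin n), ⟪v, matVec A v⟫ ≤ L * ‖v‖ ^ 2)
    (a b : EuclideanSpace ℝ (Fin n)) : |⟪a, matVec A b⟫| ≤ L * ‖a‖ * ‖b‖ := by
  obtain ⟨B, rfl⟩ := psd_eq_star_mul hA
  have key : ∀ v w : EuclideanSpace ℝ (Fin n),
      ⟪v, matVec (B.conjTranspose * B) w⟫ = ⟪toE (B.mulVec v), toE (B.mulVec w)⟫ := by
    intro v w
    rw [inner_eq_dot, inner_eq_dot, matVec, WithLp.ofLp_toLp, ← Matrix.mulVec_mulVec]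
    simp only [WithLp.ofLp_toLp, toE]
    show dotProduct _ (Matrix.mulVec _ _) = dotProduct (B.mulVec v) (B.mulVec w)
    rw [Matrix.dotProduct_mulVec, ← Matrix.mulVec_transpose]
    congr 1
  have hnrm : ∀ v : EuclideanSpace ℝ (Fin n), ‖toE (B.mulVec v)‖ ≤ Real.sqrt L * ‖v‖ := by
    intro v
    have h1 : ‖toE (B.mulVec v)‖^2 ≤ L * ‖v‖^2 := by
      rw [← real_inner_self_eq_norm_sq, ← key v v]; exact hq v
    have := Real.sqrt_le_sqrt h1
    rwa [Real.sqrt_sq (norm_nonneg _), Real.sqrt_mul hL, Real.sqrt_sq (norm_nonneg _)] at this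
  calc |⟪a, matVec (B.conjTranspose * B) b⟫|
      = |⟪toE (B.mulVec a), toE (B.mulVec b)⟫| := by rw [key]
    _ ≤ ‖toE (B.mulVec a)‖ * ‖toE (B.mulVec b)‖ := abs_real_inner_le_norm _ _
    _ ≤ (Real.sqrt L * ‖a‖) * (Real.sqrt L * ‖b‖) :=
        mul_le_mul (hnrm a) (hnrm b) (norm_nonneg _) (by positivity)
    _ = L * ‖a‖ * ‖b‖ := by rw [mul_mul_mul_comm, Real.mul_self_sqrt hL]; ring

section auxlemmas
variable {n : ℕ} {A : Matrix (Fin n) (Fin n) ℝ} {L : ℝ}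

lemma matVec_sub (a b : EuclideanSpace ℝ (Fin n)) :
    matVec A (a - b) = matVec A a - matVec A b := by
  simp [matVec, Matrix.mulVec_sub]

lemma psd_norm_le (hL : 0 ≤ L)
    (hcs : ∀ a b : EuclideanSpace ℝ (Fin n), |⟪a, matVec A b⟫| ≤ L * ‖a‖ * ‖b‖)
    (w : EuclideanSpace ℝ (Fin n)) : ‖matVec A w‖ ≤ L * ‖w‖ := by
  have h := hcs (matVec A w) w
  rw [real_inner_self_eq_norm_sq, abs_of_nonneg (by positivity)] at h
  rcases eq_or_lt_of_le (norm_nonneg (matVec A w)) with h0 | h0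
  · rw [← h0]; positivity
  · nlinarith

-- normalized vectors are 2/‖u‖-Lipschitz
lemma unit_lip {u v : EuclideanSpace ℝ (Fin n)} (hu : u ≠ 0) (hv : v ≠ 0) :
    ‖‖u‖⁻¹ • u - ‖v‖⁻¹ • v‖ ≤ 2 * ‖u - v‖ / ‖u‖ := by
  have hu' : (0:ℝ) < ‖u‖ := norm_pos_iff.mpr hu
  have hv' : (0:ℝ) < ‖v‖ := norm_pos_iff.mpr hv
  have key : ‖u‖⁻¹ • u - ‖v‖⁻¹ • v = ‖u‖⁻¹ • (u - v) + (‖u‖⁻¹ - ‖v‖⁻¹) • v := by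
    rw [smul_sub, sub_smul]; abel
  rw [key]
  have h3 : |‖v‖ - ‖u‖| ≤ ‖u - v‖ := by
    rw [abs_sub_comm]; exact abs_norm_sub_norm_le u v
  have h2 : ‖(‖u‖⁻¹ - ‖v‖⁻¹) • v‖ ≤ ‖u - v‖ / ‖u‖ := by
    rw [norm_smul, Real.norm_eq_abs]
    have he : ‖u‖⁻¹ - ‖v‖⁻¹ = (‖v‖ - ‖u‖) / (‖u‖ * ‖v‖) := by field_simp
    rw [he, abs_div, abs_of_pos (show (0:ℝ) < ‖u‖ * ‖v‖ by positivity)]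
    rw [div_mul_eq_mul_div, div_le_div_iff₀ (by positivity) hu']
    calc |‖v‖ - ‖u‖| * ‖v‖ * ‖u‖ ≤ ‖u - v‖ * ‖v‖ * ‖u‖ := by
          gcongr
      _ = ‖u - v‖ * (‖u‖ * ‖v‖) := by ring
  have h1 : ‖(‖u‖⁻¹ : ℝ) • (u - v)‖ = ‖u - v‖ / ‖u‖ := by
    rw [norm_smul, Real.norm_eq_abs, abs_of_pos (by positivity)]
    field_simp
  calc ‖(‖u‖⁻¹ : ℝ) • (u - v) + (‖u‖⁻¹ - ‖v‖⁻¹) • v‖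
      ≤ ‖(‖u‖⁻¹ : ℝ) • (u - v)‖ + ‖(‖u‖⁻¹ - ‖v‖⁻¹) • v‖ := norm_add_le _ _
    _ ≤ ‖u - v‖ / ‖u‖ + ‖u - v‖ / ‖u‖ := by rw [h1]; exact add_le_add_right h2 _
    _ = 2 * ‖u - v‖ / ‖u‖ := by ring


lemma matVec_smul (c : ℝ) (a : EuclideanSpace ℝ (Fin n)) :
    matVec A (c • a) = c • matVec A a := by
  simp [matVec, Matrix.mulVec_smul]

lemma pgrad_lip (hL : 0 ≤ L)
    (hcs : ∀ a b : EuclideanSpace ℝ (Fin n), |⟪a, matVec A b⟫| ≤ L * ‖a‖ * ‖b‖)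
    {u v : EuclideanSpace ℝ (Fin n)} (hu : u ≠ 0) (hv : v ≠ 0) :
    ‖pgrad A u - pgrad A v‖ ≤ 6 * L * ‖u - v‖ := by
  have hu' : (0:ℝ) < ‖u‖ := norm_pos_iff.mpr hu
  have hv' : (0:ℝ) < ‖v‖ := norm_pos_iff.mpr hv
  set cu : ℝ := ⟪u, matVec A u⟫ / ‖u‖ ^ 2 with hcu
  set cv : ℝ := ⟪v, matVec A v⟫ / ‖v‖ ^ 2 with hcv
  set uh : EuclideanSpace ℝ (Fin n) := ‖u‖⁻¹ • u with huh
  set vh : EuclideanSpace ℝ (Fin n) := ‖v‖⁻¹ • v with hvh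
  have hnuh : ‖uh‖ = 1 := by
    rw [huh, norm_smul, Real.norm_eq_abs, abs_of_pos (by positivity)]; field_simp
  have hnvh : ‖vh‖ = 1 := by
    rw [hvh, norm_smul, Real.norm_eq_abs, abs_of_pos (by positivity)]; field_simp
  have hcu' : cu = ⟪uh, matVec A uh⟫ := by
    rw [huh, matVec_smul, real_inner_smul_left, real_inner_smul_right, hcu, sq, div_eq_mul_inv, mul_inv]
    ring
  have hcv' : cv = ⟪vh, matVec A vh⟫ := by
    rw [hvh, matVec_smul, real_inner_smul_left, real_inner_smul_right, hcv, sq, div_eq_mul_inv, mul_inv]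
    ring
  -- |cu - cv| ≤ 4 L ‖u-v‖ / ‖u‖
  have hdiff : cu - cv = ⟪uh - vh, matVec A uh⟫ + ⟪vh, matVec A (uh - vh)⟫ := by
    rw [hcu', hcv', inner_sub_left, matVec_sub, inner_sub_right]; ring
  have hlip : ‖uh - vh‖ ≤ 2 * ‖u - v‖ / ‖u‖ := unit_lip hu hv
  have hcucv : |cu - cv| ≤ 4 * L * ‖u - v‖ / ‖u‖ := by
    rw [hdiff]
    calc |⟪uh - vh, matVec A uh⟫ + ⟪vh, matVec A (uh - vh)⟫|
        ≤ |⟪uh - vh, matVec A uh⟫| + |⟪vh, matVec A (uh - vh)⟫| := abs_add_le _ _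
      _ ≤ L * ‖uh - vh‖ * ‖uh‖ + L * ‖vh‖ * ‖uh - vh‖ := add_le_add (hcs _ _) (hcs _ _)
      _ = 2 * L * ‖uh - vh‖ := by rw [hnuh, hnvh]; ring
      _ ≤ 2 * L * (2 * ‖u - v‖ / ‖u‖) := by
          apply mul_le_mul_of_nonneg_left hlip (by positivity)
      _ = 4 * L * ‖u - v‖ / ‖u‖ := by ring
  have hcvbd : |cv| ≤ L := by
    have := hcs v v
    rw [hcv, abs_div, abs_of_pos (show (0:ℝ) < ‖v‖^2 by positivity), div_le_iff₀ (by positivity)]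
    calc |⟪v, matVec A v⟫| ≤ L * ‖v‖ * ‖v‖ := hcs v v
      _ = L * ‖v‖ ^ 2 := by ring
  have hid : pgrad A u - pgrad A v
      = matVec A (u - v) - cv • (u - v) - (cu - cv) • u := by
    rw [pgrad, pgrad, matVec_sub, ← hcu, ← hcv]
    module
  rw [hid]
  calc ‖matVec A (u - v) - cv • (u - v) - (cu - cv) • u‖
      ≤ ‖matVec A (u - v) - cv • (u - v)‖ + ‖(cu - cv) • u‖ := norm_sub_le _ _
    _ ≤ ‖matVec A (u - v)‖ + ‖cv • (u - v)‖ + ‖(cu - cv) • u‖ :=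
        add_le_add_left (norm_sub_le _ _) _
    _ ≤ L * ‖u - v‖ + L * ‖u - v‖ + (4 * L * ‖u - v‖ / ‖u‖) * ‖u‖ := by
        apply add_le_add (add_le_add (psd_norm_le hL hcs _) ?_) ?_
        · rw [norm_smul, Real.norm_eq_abs]
          exact mul_le_mul_of_nonneg_right hcvbd (norm_nonneg _)
        · rw [norm_smul, Real.norm_eq_abs]
          exact mul_le_mul_of_nonneg_right hcucv (norm_nonneg _)
    _ = 6 * L * ‖u - v‖ := by field_simp; ring

end auxlemmas

lemma contraction {M : ℕ} (hM : 2 ≤ M)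
    (W : Matrix (Fin M) (Fin M) ℝ) (hWs : W.IsSymm)
    (hWrow : ∀ i, ∑ j, W i j = 1)
    (μ : Fin M → ℝ) (u : Fin M → EuclideanSpace ℝ (Fin M)) (hu : Orthonormal ℝ u)
    (hWeig : ∀ i, matVec W (u i) = μ i • u i)
    (hμmono : ∀ i j : Fin M, i ≤ j → μ j ≤ μ i) (hμ0 : μ ⟨0, by omega⟩ = 1)
    (β : ℝ) (hβ : β = max |μ ⟨1, by omega⟩| |μ ⟨M - 1, by omega⟩|)
    (v : EuclideanSpace ℝ (Fin M)) (hv : ∑ i, v i = 0) :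
    ‖matVec ((2:ℝ)⁻¹ • (1 + W)) v‖ ^ 2 ≤ ((1 + β) / 2) ^ 2 * ‖v‖ ^ 2 := by
  haveI : Nonempty (Fin M) := ⟨⟨0, by omega⟩⟩
  have hβnn : 0 ≤ β := by
    rw [hβ]; exact le_trans (abs_nonneg _) (le_max_left _ _)
  set i0 : Fin M := ⟨0, by omega⟩ with hi0
  set i1 : Fin M := ⟨1, by omega⟩ with hi1
  set iM : Fin M := ⟨M - 1, by omega⟩ with hiM
  set Wt : Matrix (Fin M) (Fin M) ℝ := (2:ℝ)⁻¹ • (1 + W) with hWt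
  set ν : Fin M → ℝ := fun i => (1 + μ i) / 2 with hν
  have hWts : Wt.IsSymm := by
    rw [hWt, Matrix.IsSymm, Matrix.transpose_smul, Matrix.transpose_add,
      Matrix.transpose_one, hWs.eq]
  have hWtv : ∀ a : EuclideanSpace ℝ (Fin M), matVec Wt a = (2:ℝ)⁻¹ • (a + matVec W a) := by
    intro a
    rw [matVec, hWt, Matrix.smul_mulVec, Matrix.add_mulVec, Matrix.one_mulVec]
    rfl
  have hWteig : ∀ i, matVec Wt (u i) = ν i • u i := by
    intro i
    rw [hWtv, hWeig, hν]
    rw [show (u i + μ i • u i) = (1 + μ i) • u i by rw [add_smul, one_smul], smul_smul]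
    congr 1
    ring
  -- orthonormal basis
  have hcard : Fintype.card (Fin M) = Module.finrank ℝ (EuclideanSpace ℝ (Fin M)) := by
    simp
  set b : OrthonormalBasis (Fin M) ℝ (EuclideanSpace ℝ (Fin M)) :=
    (basisOfOrthonormalOfCardEqFinrank hu hcard).toOrthonormalBasis
      (by rwa [coe_basisOfOrthonormalOfCardEqFinrank]) with hb
  have hbu : ∀ i, b i = u i := by
    intro i
    rw [hb, Module.Basis.coe_toOrthonormalBasis, coe_basisOfOrthonormalOfCardEqFinrank]
  have hrepr : ∀ (a : EuclideanSpace ℝ (Fin M)) i, b.repr a i = ⟪u i, a⟫ := by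
    intro a i; rw [OrthonormalBasis.repr_apply_apply, hbu]
  have hinner : ∀ a c : EuclideanSpace ℝ (Fin M), ⟪a, c⟫ = ∑ i, ⟪u i, a⟫ * ⟪u i, c⟫ := by
    intro a c
    rw [← LinearIsometryEquiv.inner_map_map b.repr a c, inner_eq_dot]
    simp only [dotProduct]
    exact Finset.sum_congr rfl fun i _ => by rw [hrepr, hrepr]
  have hnorm : ∀ a : EuclideanSpace ℝ (Fin M), ‖a‖^2 = ∑ i, ⟪u i, a⟫^2 := by
    intro a
    rw [← real_inner_self_eq_norm_sq, hinner]
    exact Finset.sum_congr rfl fun i _ => (sq _).symm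
  -- key coefficient identity
  have hcoef : ∀ i, ⟪u i, matVec Wt v⟫ = ν i * ⟪u i, v⟫ := by
    intro i
    rw [← matVec_symm hWts, hWteig, real_inner_smul_left]
  rw [hnorm (matVec Wt v), hnorm v, Finset.mul_sum]
  apply Finset.sum_le_sum
  intro i _
  rw [hcoef, mul_pow]
  have hβ1 : |μ i1| ≤ β := hβ ▸ le_max_left _ _
  have hβM : |μ iM| ≤ β := hβ ▸ le_max_right _ _
  have hμle1 : ∀ j : Fin M, μ j ≤ 1 := fun j => hμ0 ▸ hμmono i0 j (by simp [hi0, Fin.le_def])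
  have hμlo : ∀ j : Fin M, -β ≤ μ j := by
    intro j
    have h1 : μ iM ≤ μ j := hμmono j iM (by simp [hiM, Fin.le_def]; omega)
    have h2 := neg_abs_le (μ iM)
    linarith
  have hnubd : ∀ j : Fin M, μ j ≤ β → ν j ^ 2 ≤ ((1 + β) / 2) ^ 2 := by
    intro j hup
    have hlo := hμlo j
    apply sq_le_sq' <;> rw [hν] <;> simp only <;> [linarith; linarith]
  by_cases hcase : 1 ≤ β
  · have := hnubd i (le_trans (hμle1 i) hcase)
    exact mul_le_mul_of_nonneg_right this (sq_nonneg _)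
  · push_neg at hcase
    by_cases hi : i = i0
    · -- coefficient ⟪u i0, v⟫ vanishes
      have hone : matVec W (toE fun _ => 1) = toE fun _ => 1 := by
        ext j
        show ∑ k, W j k * 1 = 1
        simp [hWrow j]
      have hker : ∀ j, j ≠ i0 → ⟪u j, toE fun _ => 1⟫ = 0 := by
        intro j hj
        have hjv : (j : ℕ) ≠ 0 := fun h => hj (Fin.ext (by simp [h, hi0]))
        have h2 : μ j * ⟪u j, toE fun _ => 1⟫ = ⟪u j, toE fun _ => 1⟫ := by
          conv_rhs => rw [← hone, ← matVec_symm hWs, hWeig, real_inner_smul_left]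
        have hj1 : μ j < 1 := by
          have h3 : μ j ≤ μ i1 := hμmono i1 j (by simp [hi1, Fin.le_def]; omega)
          have h4 := le_abs_self (μ i1)
          linarith
        have h5 : (μ j - 1) * ⟪u j, toE fun _ => 1⟫ = 0 := by linear_combination h2
        exact (mul_eq_zero.mp h5).resolve_left (sub_ne_zero.mpr (ne_of_lt hj1))
      have hsumv : ⟪(toE fun _ => 1 : EuclideanSpace ℝ (Fin M)), v⟫ = 0 := by
        rw [inner_eq_dot]
        simpa [dotProduct, toE] using hv
      have hMne : (0:ℝ) < M := by positivity
      have honenz : ⟪u i0, toE fun _ => 1⟫ ≠ 0 := by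
        intro hz
        have h6 : ‖(toE fun _ => 1 : EuclideanSpace ℝ (Fin M))‖ ^ 2 = (M : ℝ) := by
          rw [norm_sq_eq']
          simp [toE]
        rw [hnorm] at h6
        rw [Finset.sum_eq_single i0 (fun j _ hj => by rw [hker j hj]; ring)
          (fun h => absurd (Finset.mem_univ i0) h), hz] at h6
        norm_num at h6
        exact absurd h6.symm (by positivity)
      have hc0 : ⟪u i0, v⟫ = 0 := by
        have h7 := hinner (toE fun _ => 1) v
        rw [hsumv, Finset.sum_eq_single i0
          (fun j _ hj => by rw [hker j hj]; ring)
          (fun h => absurd (Finset.mem_univ i0) h)] at h7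
        rcases mul_eq_zero.mp h7.symm with h | h
        · exact absurd h honenz
        · exact h
      rw [hi, hc0]
      simp
    · have hjv : (i : ℕ) ≠ 0 := fun h => hi (Fin.ext (by simp [h, hi0]))
      have h3 : μ i ≤ μ i1 := hμmono i1 i (by simp [hi1, Fin.le_def]; omega)
      have h4 := le_abs_self (μ i1)
      exact mul_le_mul_of_nonneg_right (hnubd i (by linarith)) (sq_nonneg _)


/-- gradient-tracking error recursion for FAST-PCA (first eigenvector).
Here `t = T + 1 ≥ 1`, `g^(t) = (1/M)Σᵢ h_i(x_i^(t))`, `β = max{|λ₂(W)|, |λ_M(W)|}`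
(eigenvalues of `W` in decreasing order, 0-based indexing), and `L₁ = 6λ₁` where
`λ₁ = lam ⟨0, _⟩` is the largest eigenvalue of `C = Σᵢ C_i`. -/
theorem fastpca_tracking_error_recursion
    {d M : ℕ} (hd : 0 < d) (hM : 2 ≤ M)
    (Ci : Fin M → Matrix (Fin d) (Fin d) ℝ) (hCi : ∀ i, (Ci i).PosSemidef)
    (lam : Fin d → ℝ) (q : Fin d → EuclideanSpace ℝ (Fin d))
    (hq : Orthonormal ℝ q)
    (heig : ∀ l, matVec (∑ i, Ci i) (q l) = lam l • q l)
    (hmono : ∀ i j : Fin d, i ≤ j → lam j ≤ lam i) (hnn : ∀ l, 0 ≤ lam l)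
    (W : Matrix (Fin M) (Fin M) ℝ) (hWs : W.IsSymm)
    (hWnn : ∀ i j, 0 ≤ W i j)
    (hWrow : ∀ i, ∑ j, W i j = 1) (hWcol : ∀ j, ∑ i, W i j = 1)
    (μ : Fin M → ℝ) (u : Fin M → EuclideanSpace ℝ (Fin M)) (hu : Orthonormal ℝ u)
    (hWeig : ∀ i, matVec W (u i) = μ i • u i)
    (hμmono : ∀ i j : Fin M, i ≤ j → μ j ≤ μ i) (hμ0 : μ ⟨0, by omega⟩ = 1)
    (β : ℝ) (hβ : β = max |μ ⟨1, by omega⟩| |μ ⟨M - 1, by omega⟩|)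
    (α : ℝ) (hα0 : 0 < α)
    (x s : ℕ → Fin M → EuclideanSpace ℝ (Fin d))
    (hxnz : ∀ t i, x t i ≠ 0)
    (hxupd : ∀ t i, x (t + 1) i =
      (1 / 2 : ℝ) • x t i + ∑ j, (W i j / 2) • x t j + α • s t i)
    (hsupd : ∀ t i, s (t + 1) i =
      (1 / 2 : ℝ) • s t i + ∑ j, (W i j / 2) • s t j
        + pgrad (Ci i) (x (t + 1) i) - pgrad (Ci i) (x t i))
    (T : ℕ)
    (havg : (M : ℝ)⁻¹ • ∑ i, s T i = (M : ℝ)⁻¹ • ∑ i, pgrad (Ci i) (x T i)) :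
    Real.sqrt (∑ i, ‖s (T + 1) i - (M : ℝ)⁻¹ • ∑ j, pgrad (Ci j) (x (T + 1) j)‖ ^ 2) ≤
      (1 + β) / 2 *
          Real.sqrt (∑ i, ‖s T i - (M : ℝ)⁻¹ • ∑ j, pgrad (Ci j) (x T j)‖ ^ 2) +
        6 * lam ⟨0, hd⟩ * Real.sqrt (∑ i, ‖x (T + 1) i - x T i‖ ^ 2) := by
  classical
  have hMnat : 0 < M := by omega
  have hMpos : (0:ℝ) < M := by exact_mod_cast hMnat
  have hL : 0 ≤ lam ⟨0, hd⟩ := hnn _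
  set L : ℝ := lam ⟨0, hd⟩ with hLdef
  have hβnn : 0 ≤ β := le_trans (abs_nonneg _) (hβ ▸ le_max_left _ _)
  set γ : ℝ := (1 + β) / 2 with hγdef
  have hγnn : 0 ≤ γ := by rw [hγdef]; linarith
  -- Lipschitz bound on each pseudo-gradient
  have hCs : (∑ i, Ci i).IsSymm := by
    show (∑ i, Ci i).transpose = ∑ i, Ci i
    rw [Matrix.transpose_sum]
    exact Finset.sum_congr rfl fun i _ => (hCi i).isHermitian
  have hquadC : ∀ v : EuclideanSpace ℝ (Fin d), ⟪v, matVec (∑ i, Ci i) v⟫ ≤ L * ‖v‖ ^ 2 :=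
    fun v => quad_bound hd hCs hq heig hmono v
  have hquad : ∀ i (v : EuclideanSpace ℝ (Fin d)), ⟪v, matVec (Ci i) v⟫ ≤ L * ‖v‖ ^ 2 := by
    intro i v
    refine le_trans ?_ (hquadC v)
    rw [matVec_sum, inner_sum]
    exact Finset.single_le_sum (f := fun j => ⟪v, matVec (Ci j) v⟫)
      (fun j _ => by
        show (0:ℝ) ≤ ⟪v, matVec (Ci j) v⟫
        rw [inner_eq_dot]; exact (Matrix.posSemidef_iff_dotProduct_mulVec.mp (hCi j)).2 v) (Finset.mem_univ i)
  have hcs : ∀ i (a b : EuclideanSpace ℝ (Fin d)), |⟪a, matVec (Ci i) b⟫| ≤ L * ‖a‖ * ‖b‖ :=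
    fun i => psd_cs (hCi i) hL (hquad i)
  have hlip : ∀ i, ‖pgrad (Ci i) (x (T+1) i) - pgrad (Ci i) (x T i)‖
      ≤ 6 * L * ‖x (T+1) i - x T i‖ :=
    fun i => pgrad_lip hL (hcs i) (hxnz (T+1) i) (hxnz T i)
  -- abbreviations
  set g : EuclideanSpace ℝ (Fin d) := (M : ℝ)⁻¹ • ∑ j, pgrad (Ci j) (x T j) with hgdef
  set g' : EuclideanSpace ℝ (Fin d) := (M : ℝ)⁻¹ • ∑ j, pgrad (Ci j) (x (T+1) j) with hg'def
  set Δ : Fin M → EuclideanSpace ℝ (Fin d) :=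
    fun i => pgrad (Ci i) (x (T+1) i) - pgrad (Ci i) (x T i) with hΔdef
  set m : EuclideanSpace ℝ (Fin d) := (M : ℝ)⁻¹ • ∑ j, Δ j with hmdef
  set e : Fin M → EuclideanSpace ℝ (Fin d) := fun i => s T i - g with hedef
  set a : Fin M → EuclideanSpace ℝ (Fin d) :=
    fun i => (1 / 2 : ℝ) • e i + ∑ j, (W i j / 2) • e j with hadef
  set bb : Fin M → EuclideanSpace ℝ (Fin d) := fun i => Δ i - m with hbbdef
  have hg' : g' = g + m := by
    rw [hg'def, hgdef, hmdef, ← smul_add, ← Finset.sum_add_distrib]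
    congr 1
    refine Finset.sum_congr rfl fun j _ => ?_
    simp only [hΔdef]
    abel
  have hdecomp : ∀ i, s (T+1) i - g' = a i + bb i := by
    intro i
    have hrow2 : ∑ j, (W i j / 2) • e j
        = (∑ j, (W i j / 2) • s T j) - (2:ℝ)⁻¹ • g := by
      simp only [hedef, smul_sub]
      rw [Finset.sum_sub_distrib, ← Finset.sum_smul]
      congr 2
      rw [← Finset.sum_div, hWrow i]
      norm_num
    rw [hsupd T i, hg', hadef]
    simp only
    rw [hrow2, hbbdef, hedef]
    simp only [hΔdef]
    module
  -- sum of e vanishes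
  have hesum : ∑ j, e j = 0 := by
    simp only [hedef]
    rw [Finset.sum_sub_distrib, Finset.sum_const, Finset.card_univ, Fintype.card_fin,
      sub_eq_zero]
    have h1 : (M:ℝ) • ((M : ℝ)⁻¹ • ∑ i, s T i) = (M:ℝ) • g := by rw [havg, hgdef]
    rw [smul_smul, mul_inv_cancel₀ (ne_of_gt hMpos), one_smul] at h1
    rw [h1, ← Nat.cast_smul_eq_nsmul ℝ]
  -- contraction estimate
  have hA2 : ∑ i, ‖a i‖ ^ 2 ≤ γ ^ 2 * ∑ i, ‖e i‖ ^ 2 := by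
    have hak : ∀ i k, a i k = matVec ((2:ℝ)⁻¹ • (1 + W)) (toE fun j => e j k) i := by
      intro i k
      have h1 : a i k = (1/2 : ℝ) * e i k + ∑ j, (W i j / 2) * e j k := by
        rw [hadef]
        simp only [PiLp.add_apply, PiLp.smul_apply, smul_eq_mul]
        congr 1
        rw [WithLp.ofLp_sum, Finset.sum_apply]
        exact Finset.sum_congr rfl fun j _ => by rw [PiLp.smul_apply, smul_eq_mul]
      have h2 : matVec ((2:ℝ)⁻¹ • (1 + W)) (toE fun j => e j k) i
          = (2:ℝ)⁻¹ * (e i k + ∑ j, W i j * e j k) := by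
        show Matrix.mulVec ((2:ℝ)⁻¹ • (1 + W)) (fun j => e j k) i = _
        rw [Matrix.smul_mulVec, Matrix.add_mulVec, Matrix.one_mulVec]
        simp only [Pi.smul_apply, Pi.add_apply, smul_eq_mul]
        congr 1
      rw [h1, h2, mul_add, Finset.mul_sum]
      congr 1
      · ring
      · exact Finset.sum_congr rfl fun j _ => by ring
    calc ∑ i, ‖a i‖ ^ 2 = ∑ i, ∑ k, (a i k) ^ 2 :=
          Finset.sum_congr rfl fun i _ => norm_sq_eq' (a i)
      _ = ∑ k, ∑ i, (matVec ((2:ℝ)⁻¹ • (1 + W)) (toE fun j => e j k) i) ^ 2 := by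
          rw [Finset.sum_comm]
          exact Finset.sum_congr rfl fun k _ => Finset.sum_congr rfl fun i _ => by rw [hak]
      _ = ∑ k, ‖matVec ((2:ℝ)⁻¹ • (1 + W)) (toE fun j => e j k)‖ ^ 2 :=
          Finset.sum_congr rfl fun k _ => (norm_sq_eq' _).symm
      _ ≤ ∑ k, γ ^ 2 * ‖toE (fun j => e j k)‖ ^ 2 := by
          apply Finset.sum_le_sum
          intro k _
          apply contraction hM W hWs hWrow μ u hu hWeig hμmono hμ0 β hβ
          have := congrArg (fun v : EuclideanSpace ℝ (Fin d) => v k) hesum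
          simp only [WithLp.ofLp_sum, Finset.sum_apply] at this
          exact this
      _ = γ ^ 2 * ∑ i, ‖e i‖ ^ 2 := by
          rw [← Finset.mul_sum]
          congr 1
          calc ∑ k : Fin d, ‖toE (fun j => e j k)‖ ^ 2
              = ∑ k : Fin d, ∑ j : Fin M, (e j k) ^ 2 :=
                Finset.sum_congr rfl fun k _ => by rw [norm_sq_eq']; rfl
            _ = ∑ j : Fin M, ∑ k : Fin d, (e j k) ^ 2 := Finset.sum_comm
            _ = ∑ j : Fin M, ‖e j‖ ^ 2 :=
                Finset.sum_congr rfl fun j _ => (norm_sq_eq' (e j)).symm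
  -- tracking-difference estimate
  have hB2 : ∑ i, ‖bb i‖ ^ 2 ≤ (6 * L) ^ 2 * ∑ i, ‖x (T+1) i - x T i‖ ^ 2 := by
    have hΔm : ∑ i, ‖bb i‖ ^ 2 ≤ ∑ i, ‖Δ i‖ ^ 2 := by
      have hsm : ⟪∑ i, Δ i, m⟫ = (M:ℝ) * ‖m‖ ^ 2 := by
        have h3 : ∑ i, Δ i = (M:ℝ) • m := by
          rw [hmdef, smul_smul, mul_inv_cancel₀ (ne_of_gt hMpos), one_smul]
        rw [h3, real_inner_smul_left, real_inner_self_eq_norm_sq]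
      have h4 : ∑ i, ‖bb i‖ ^ 2 = ∑ i, ‖Δ i‖ ^ 2 - (M:ℝ) * ‖m‖ ^ 2 := by
        calc ∑ i, ‖bb i‖ ^ 2 = ∑ i, (‖Δ i‖ ^ 2 - 2 * ⟪Δ i, m⟫ + ‖m‖ ^ 2) :=
              Finset.sum_congr rfl fun i _ => by rw [hbbdef]; exact norm_sub_sq_real _ _
          _ = ∑ i, ‖Δ i‖ ^ 2 - 2 * ⟪∑ i, Δ i, m⟫ + (M:ℝ) * ‖m‖ ^ 2 := by
              rw [Finset.sum_add_distrib, Finset.sum_sub_distrib, sum_inner, Finset.mul_sum,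
                Finset.sum_const, Finset.card_univ, Fintype.card_fin, nsmul_eq_mul]
          _ = ∑ i, ‖Δ i‖ ^ 2 - (M:ℝ) * ‖m‖ ^ 2 := by rw [hsm]; ring
      rw [h4]
      have : 0 ≤ (M:ℝ) * ‖m‖ ^ 2 := by positivity
      linarith
    refine le_trans hΔm ?_
    rw [Finset.mul_sum]
    apply Finset.sum_le_sum
    intro i _
    calc ‖Δ i‖ ^ 2 ≤ (6 * L * ‖x (T+1) i - x T i‖) ^ 2 := by
          apply sq_le_sq' ?_ (hlip i)
          have := norm_nonneg (Δ i)
          have h5 := hlip i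
          have h6 : 0 ≤ 6 * L * ‖x (T+1) i - x T i‖ := by positivity
          linarith
      _ = (6 * L) ^ 2 * ‖x (T+1) i - x T i‖ ^ 2 := by ring
  -- Minkowski step
  set SA : ℝ := Real.sqrt (∑ i, ‖a i‖ ^ 2) with hSA
  set SB : ℝ := Real.sqrt (∑ i, ‖bb i‖ ^ 2) with hSB
  have hgoal1 : Real.sqrt (∑ i, ‖s (T+1) i - g'‖ ^ 2) ≤ SA + SB := by
    set va : EuclideanSpace ℝ (Fin M) := toE fun i => ‖a i‖ with hva
    set vb : EuclideanSpace ℝ (Fin M) := toE fun i => ‖bb i‖ with hvb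
    have h1 : ∑ i, ‖s (T+1) i - g'‖ ^ 2 ≤ ∑ i, (‖a i‖ + ‖bb i‖) ^ 2 := by
      apply Finset.sum_le_sum
      intro i _
      rw [hdecomp i]
      exact pow_le_pow_left₀ (norm_nonneg _) (norm_add_le _ _) 2
    have h2 : ∑ i, (‖a i‖ + ‖bb i‖) ^ 2 = ‖va + vb‖ ^ 2 := by
      rw [norm_sq_eq']
      exact Finset.sum_congr rfl fun i _ => by rw [PiLp.add_apply]; rfl
    have h3 : Real.sqrt (∑ i, ‖s (T+1) i - g'‖ ^ 2) ≤ ‖va + vb‖ := by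
      rw [← Real.sqrt_sq (norm_nonneg (va + vb)), ← h2]
      exact Real.sqrt_le_sqrt h1
    refine le_trans h3 (le_trans (norm_add_le va vb) ?_)
    apply add_le_add
    · rw [hSA, ← Real.sqrt_sq (norm_nonneg va), norm_sq_eq']
      exact le_of_eq (congrArg Real.sqrt (Finset.sum_congr rfl fun i _ => rfl))
    · rw [hSB, ← Real.sqrt_sq (norm_nonneg vb), norm_sq_eq']
      exact le_of_eq (congrArg Real.sqrt (Finset.sum_congr rfl fun i _ => rfl))
  have hgoal2 : SA ≤ γ * Real.sqrt (∑ i, ‖e i‖ ^ 2) := by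
    rw [hSA]
    refine le_trans (Real.sqrt_le_sqrt hA2) ?_
    rw [Real.sqrt_mul (sq_nonneg γ), Real.sqrt_sq hγnn]
  have hgoal3 : SB ≤ 6 * L * Real.sqrt (∑ i, ‖x (T+1) i - x T i‖ ^ 2) := by
    rw [hSB]
    refine le_trans (Real.sqrt_le_sqrt hB2) ?_
    rw [Real.sqrt_mul (sq_nonneg (6*L)), Real.sqrt_sq (by positivity)]
  calc Real.sqrt (∑ i, ‖s (T + 1) i - g'‖ ^ 2) ≤ SA + SB := hgoal1
    _ ≤ γ * Real.sqrt (∑ i, ‖e i‖ ^ 2)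
        + 6 * L * Real.sqrt (∑ i, ‖x (T+1) i - x T i‖ ^ 2) := add_le_add hgoal2 hgoal3
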